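/- Let G=(V,E) be a connected simple graph not isomorphic to a star, let k be an integer with 1 ≤ k < |V|−1, and let G'=(V',E') = β(G,k). Then there exists S with L ∪ M ⊊ S ⊊ V' such that G'[S] is a proportionally dense subgraph if and only if G has an independent set of size at least k. -/

import Mathlib

open SimpleGraph

/-- Number of neighbors of `v` inside `T`. -/
noncomputable def degIn {W : Type*} (G : SimpleGraph W) (T : Set W) (v : W) : ℕ :=
  (T ∩ G.neighborSet v).ncard

/-- `G[S]` is a proportionally dense subgraph. -/
def IsPDS {W : Type*} (G : SimpleGraph W) (S : Set W) : Prop :=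
  S ⊂ Set.univ ∧ 2 ≤ S.ncard ∧
    ∀ u ∈ S, degIn G Sᶜ u * (S.ncard - 1) ≤ degIn G S u * Sᶜ.ncard

/-- A star is a complete bipartite graph `K_{1,ℓ}`, `ℓ ≥ 1`. -/
def IsStar {V : Type*} (G : SimpleGraph V) : Prop :=
  ∃ ℓ : ℕ, 1 ≤ ℓ ∧ Nonempty (G ≃g completeBipartiteGraph Unit (Fin ℓ))

/-- The number `|L| = |M| ⬝ (|V| - k - 1) - k + 1` of extra vertices in `β(G,k)`. -/
noncomputable def lsize {V : Type*} [Fintype V] (G : SimpleGraph V) (k : ℕ) : ℕ :=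
  G.edgeSet.ncard * (Fintype.card V - k - 1) - k + 1

/-- Vertex type of the bipartite graph `β(G,k)`: `L` (the `Fin` part), `M` (edge
vertices), and `N = V`. -/
abbrev BetaVert (V : Type*) [Fintype V] (G : SimpleGraph V) (k : ℕ) : Type _ :=
  (Fin (lsize G k) ⊕ ↥G.edgeSet) ⊕ V

/-- The bipartite graph `β(G,k)`: every vertex of `M` is adjacent to every vertex
of `L`, and a vertex `e ∈ M` is adjacent to `u ∈ N` iff `u` is not an endpoint
of the edge `e` of `G`; there are no other edges. -/
def betaGraph {V : Type*} [Fintype V] (G : SimpleGraph V) (k : ℕ) :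
    SimpleGraph (BetaVert V G k) where
  Adj x y :=
    match x, y with
    | Sum.inl (Sum.inl _), Sum.inl (Sum.inr _) => True
    | Sum.inl (Sum.inr _), Sum.inl (Sum.inl _) => True
    | Sum.inl (Sum.inr e), Sum.inr u => u ∉ (e : Sym2 V)
    | Sum.inr u, Sum.inl (Sum.inr e) => u ∉ (e : Sym2 V)
    | _, _ => False
  symm := by
    constructor
    rintro ((a | e) | u) ((b | f) | v) h <;> simp_all
  loopless := by
    constructor
    rintro ((a | e) | u) h <;> simp_all

/-- The set `L ∪ M` in `β(G,k)`. -/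
def betaLM {V : Type*} [Fintype V] (G : SimpleGraph V) (k : ℕ) : Set (BetaVert V G k) :=
  Set.range Sum.inl

/-- The set `M` of edge-vertices in `β(G,k)`. -/
def betaM {V : Type*} [Fintype V] (G : SimpleGraph V) (k : ℕ) : Set (BetaVert V G k) :=
  Set.range (fun e : ↥G.edgeSet => Sum.inl (Sum.inr e))

/- ######## auxiliary lemmas ######## -/

lemma my_exists_adj_dist_lt {V : Type*} (G : SimpleGraph V) (hconn : G.Connected)
    (v0 v : V) (hne : v ≠ v0) :
    ∃ u, G.Adj v u ∧ G.dist u v0 < G.dist v v0 := by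
  have hr : G.Reachable v v0 := hconn.preconnected v v0
  obtain ⟨p, hp⟩ := hr.exists_walk_length_eq_dist
  cases p with
  | nil => exact absurd rfl hne
  | @cons _ u _ h q =>
    refine ⟨u, h, ?_⟩
    have h2 : G.dist u v0 ≤ q.length := SimpleGraph.dist_le q
    simp only [SimpleGraph.Walk.length_cons] at hp
    omega

lemma my_card_le_edge {V : Type*} [Fintype V] (G : SimpleGraph V) (hconn : G.Connected) :
    Fintype.card V - 1 ≤ G.edgeSet.ncard := by
  classical
  obtain ⟨v0⟩ := hconn.nonempty
  choose f hadj hlt using fun v (h : v ≠ v0) => my_exists_adj_dist_lt G hconn v0 v h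
  let F : V → Option G.edgeSet := fun v =>
    if h : v = v0 then none else some ⟨s(v, f v h), (hadj v h)⟩
  have hinj : Function.Injective F := by
    intro a b hab
    simp only [F] at hab
    by_cases h1 : a = v0 <;> by_cases h2 : b = v0
    · exact h1.trans h2.symm
    · rw [dif_pos h1, dif_neg h2] at hab; cases hab
    · rw [dif_neg h1, dif_pos h2] at hab; cases hab
    · rw [dif_neg h1, dif_neg h2] at hab
      have h5 : s(a, f a h1) = s(b, f b h2) :=
          congrArg Subtype.val (Option.some_injective _ hab)
      rw [Sym2.eq_iff] at h5
      rcases h5 with ⟨h3, _⟩ | ⟨h3, h4⟩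
      · exact h3
      · exfalso
        have l1 := hlt a h1
        have l2 := hlt b h2
        rw [h4] at l1; rw [← h3] at l2
        omega
  have hle := Nat.card_le_card_of_injective F hinj
  have h1 : Nat.card (Option ↥G.edgeSet) = G.edgeSet.ncard + 1 := by
    rw [Nat.card_eq_fintype_card, Fintype.card_option, ← Nat.card_coe_set_eq,
      Nat.card_eq_fintype_card]
  rw [h1, Nat.card_eq_fintype_card] at hle
  omega

lemma my_edge_exists {V : Type*} [Fintype V] (G : SimpleGraph V) (hconn : G.Connected)
    (hn : 2 ≤ Fintype.card V) : 1 ≤ G.edgeSet.ncard := by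
  have := my_card_le_edge G hconn
  omega

section Beta

variable {V : Type*} [Fintype V] {G : SimpleGraph V} {k : ℕ}

lemma nbr_L (a : Fin (lsize G k)) :
    (betaGraph G k).neighborSet (Sum.inl (Sum.inl a)) = betaM G k := by
  ext ((b | f) | v) <;> simp [betaGraph, SimpleGraph.neighborSet, betaM]

lemma nbr_M (e : ↥G.edgeSet) :
    (betaGraph G k).neighborSet (Sum.inl (Sum.inr e)) =
      Set.range (Sum.inl ∘ Sum.inl) ∪ Sum.inr '' {u : V | u ∉ (e : Sym2 V)} := by
  ext ((b | f) | v) <;> simp [betaGraph, SimpleGraph.neighborSet]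

lemma nbr_N (u : V) :
    (betaGraph G k).neighborSet (Sum.inr u) =
      (fun e : ↥G.edgeSet => Sum.inl (Sum.inr e)) '' {e : ↥G.edgeSet | u ∉ (e : Sym2 V)} := by
  ext ((b | f) | v) <;> simp [betaGraph, SimpleGraph.neighborSet]

end Beta

section Beta2

variable {V : Type*} [Fintype V] {G : SimpleGraph V} {k : ℕ}

lemma compl_SA (A : Set V) :
    (betaLM G k ∪ Sum.inr '' A)ᶜ = (Sum.inr '' Aᶜ : Set (BetaVert V G k)) := by
  ext ((b | f) | v) <;> simp [betaLM]

lemma disj_LM_A (A : Set V) :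
    Disjoint (betaLM G k) (Sum.inr '' A : Set (BetaVert V G k)) := by
  rw [Set.disjoint_left]
  rintro _ ⟨y, rfl⟩ ⟨v, -, h⟩
  cases h

lemma ncard_betaLM : (betaLM G k).ncard = lsize G k + G.edgeSet.ncard := by
  rw [betaLM, ← Set.image_univ, Set.ncard_image_of_injective _ Sum.inl_injective,
    Set.ncard_univ, Nat.card_sum, Nat.card_coe_set_eq, Nat.card_eq_fintype_card,
    Fintype.card_fin]

lemma ncard_SA (A : Set V) :
    (betaLM G k ∪ Sum.inr '' A).ncard = lsize G k + G.edgeSet.ncard + A.ncard := by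
  rw [Set.ncard_union_eq (disj_LM_A A) (Set.toFinite _) (Set.toFinite _), ncard_betaLM,
    Set.ncard_image_of_injective _ Sum.inr_injective]

lemma ncard_SA_compl (A : Set V) :
    (betaLM G k ∪ Sum.inr '' A)ᶜ.ncard = Aᶜ.ncard := by
  rw [compl_SA, Set.ncard_image_of_injective _ Sum.inr_injective]

lemma degIn_Sc_L (A : Set V) (a : Fin (lsize G k)) :
    degIn (betaGraph G k) (betaLM G k ∪ Sum.inr '' A)ᶜ (Sum.inl (Sum.inl a)) = 0 := by
  rw [degIn, compl_SA, nbr_L]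
  have h : (Sum.inr '' Aᶜ ∩ betaM G k : Set (BetaVert V G k)) = ∅ := by
    apply Set.eq_empty_iff_forall_notMem.mpr
    rintro x ⟨⟨v, -, rfl⟩, e, he⟩
    cases he
  rw [h, Set.ncard_empty]

lemma degIn_Sc_N (A : Set V) (u : V) :
    degIn (betaGraph G k) (betaLM G k ∪ Sum.inr '' A)ᶜ (Sum.inr u) = 0 := by
  rw [degIn, compl_SA, nbr_N]
  have h : (Sum.inr '' Aᶜ ∩
      (fun e : ↥G.edgeSet => Sum.inl (Sum.inr e)) '' {e : ↥G.edgeSet | u ∉ (e : Sym2 V)}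
        : Set (BetaVert V G k)) = ∅ := by
    apply Set.eq_empty_iff_forall_notMem.mpr
    rintro x ⟨⟨v, -, rfl⟩, e, -, he⟩
    cases he
  rw [h, Set.ncard_empty]

lemma degIn_S_M (A : Set V) (e : ↥G.edgeSet) (x y : V) (hxy : (e : Sym2 V) = s(x, y)) :
    degIn (betaGraph G k) (betaLM G k ∪ Sum.inr '' A) (Sum.inl (Sum.inr e)) =
      lsize G k + (A \ {x, y}).ncard := by
  rw [degIn, nbr_M]
  have hset : (betaLM G k ∪ Sum.inr '' A) ∩
      (Set.range (Sum.inl ∘ Sum.inl) ∪ Sum.inr '' {u : V | u ∉ (e : Sym2 V)}) =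
      Set.range (Sum.inl ∘ Sum.inl) ∪ (Sum.inr '' (A \ {x, y}) : Set (BetaVert V G k)) := by
    ext ((b | f) | v) <;>
      simp [betaLM, hxy, Set.mem_diff, Set.mem_insert_iff, and_comm]
  rw [hset, Set.ncard_union_eq ?_ (Set.toFinite _) (Set.toFinite _),
    Set.ncard_image_of_injective _ Sum.inr_injective]
  · congr 1
    rw [← Set.image_univ, Set.ncard_image_of_injective _
      (Sum.inl_injective.comp Sum.inl_injective), Set.ncard_univ, Nat.card_eq_fintype_card,
      Fintype.card_fin]
  · rw [Set.disjoint_left]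
    rintro _ ⟨y, rfl⟩ ⟨v, -, h⟩
    cases h

lemma degIn_Sc_M (A : Set V) (e : ↥G.edgeSet) (x y : V) (hxy : (e : Sym2 V) = s(x, y)) :
    degIn (betaGraph G k) (betaLM G k ∪ Sum.inr '' A)ᶜ (Sum.inl (Sum.inr e)) =
      (Aᶜ \ {x, y}).ncard := by
  rw [degIn, compl_SA, nbr_M]
  have hset : (Sum.inr '' Aᶜ : Set (BetaVert V G k)) ∩
      (Set.range (Sum.inl ∘ Sum.inl) ∪ Sum.inr '' {u : V | u ∉ (e : Sym2 V)}) =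
      Sum.inr '' (Aᶜ \ {x, y}) := by
    ext ((b | f) | v) <;>
      simp [hxy, Set.mem_diff, Set.mem_insert_iff, and_comm]
  rw [hset, Set.ncard_image_of_injective _ Sum.inr_injective]

end Beta2

lemma arith_prep {n m k ℓ : ℕ} (hn : k + 2 ≤ n) (hm : n - 1 ≤ m)
    (hℓ : ℓ + k = m * (n - k - 1) + 1) :
    ∃ c ℓ', 1 ≤ c ∧ n = k + c + 1 ∧ ℓ = ℓ' + 1 ∧ ℓ' + k = m * c ∧ k + 1 ≤ m := by
  have hc : 1 ≤ n - k - 1 := by omega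
  have hm1 : k + 1 ≤ m := by omega
  have hmm : m ≤ m * (n - k - 1) := Nat.le_mul_of_pos_right m (by omega)
  refine ⟨n - k - 1, ℓ - 1, hc, by omega, by omega, by omega, hm1⟩

lemma arith_t2 {n m k ℓ a sA sC : ℕ} (hn : k + 2 ≤ n) (hm : n - 1 ≤ m)
    (hℓ : ℓ + k = m * (n - k - 1) + 1)
    (hA : 2 + sA = a) (hAc : 0 + sC = n - a) (ha2 : a < n)
    (hcond : sC * (ℓ + m + a - 1) ≤ (ℓ + sA) * (n - a)) : False := by
  obtain ⟨c, ℓ', hc, hnc, hℓ', hmc, hm1⟩ := arith_prep hn hm hℓ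
  subst hℓ' hnc
  have e1 : ℓ' + 1 + m + a - 1 = ℓ' + m + a := by omega
  have e2 : k + c + 1 - a = sC := by omega
  rw [e1, e2] at hcond
  have hsC : 1 ≤ sC := by omega
  nlinarith [hcond, hsC, hm1]

lemma arith_t1 {n m k ℓ a sA sC : ℕ} (hn : k + 2 ≤ n) (hm : n - 1 ≤ m)
    (hℓ : ℓ + k = m * (n - k - 1) + 1)
    (hA : 1 + sA = a) (hAc : 1 + sC = n - a) (ha2 : a < n)
    (hcond : sC * (ℓ + m + a - 1) ≤ (ℓ + sA) * (n - a)) : k ≤ a := by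
  obtain ⟨c, ℓ', hc, hnc, hℓ', hmc, hm1⟩ := arith_prep hn hm hℓ
  subst hℓ' hnc
  have e1 : ℓ' + 1 + m + a - 1 = ℓ' + m + a := by omega
  have e2 : k + c + 1 - a = 1 + sC := by omega
  rw [e1, e2] at hcond
  have hsC : a + 1 + sC = k + c + 1 := by omega
  by_contra hko
  nlinarith [hcond, hm1, hmc, hsC]

lemma arith_ok {n m k ℓ t t' sA sC : ℕ} (hn : k + 2 ≤ n) (hm : n - 1 ≤ m)
    (hℓ : ℓ + k = m * (n - k - 1) + 1)
    (hA : t + sA = k) (hAc : t' + sC = n - k) (ht : t ≤ 1) (htt : t + t' = 2) :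
    sC * (ℓ + m + k - 1) ≤ (ℓ + sA) * (n - k) := by
  obtain ⟨c, ℓ', hc, hnc, hℓ', hmc, hm1⟩ := arith_prep hn hm hℓ
  subst hℓ' hnc
  have e1 : ℓ' + 1 + m + k - 1 = ℓ' + m + k := by omega
  have e2 : k + c + 1 - k = c + 1 := by omega
  rw [e1, e2]
  interval_cases t
  · -- t = 0, t' = 2, sC = c - 1, sA = k
    have h1 : sC + 1 = c := by omega
    have h2 : sA = k := by omega
    nlinarith [hmc, hm1, h1, h2]
  · -- t = 1, t' = 1, sC = c, sA = k - 1
    have h1 : sC = c := by omega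
    have h2 : sA + 1 = k := by omega
    nlinarith [hmc, hm1, h1, h2]

section Main

variable {V : Type*} [Fintype V] {G : SimpleGraph V} {k : ℕ}

lemma cond_simp (A : Set V) (x y : V) (hs : s(x, y) ∈ G.edgeSet) :
    (degIn (betaGraph G k) (betaLM G k ∪ Sum.inr '' A)ᶜ (Sum.inl (Sum.inr ⟨s(x, y), hs⟩)) *
        ((betaLM G k ∪ Sum.inr '' A).ncard - 1) ≤
      degIn (betaGraph G k) (betaLM G k ∪ Sum.inr '' A) (Sum.inl (Sum.inr ⟨s(x, y), hs⟩)) *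
        (betaLM G k ∪ Sum.inr '' A)ᶜ.ncard)
    ↔ ((Aᶜ \ {x, y}).ncard * (lsize G k + G.edgeSet.ncard + A.ncard - 1) ≤
      (lsize G k + (A \ {x, y}).ncard) * Aᶜ.ncard) := by
  rw [degIn_S_M A _ x y rfl, degIn_Sc_M A _ x y rfl, ncard_SA, ncard_SA_compl]

lemma counts (A : Set V) {x y : V} (hxy : x ≠ y) :
    (A ∩ {x, y}).ncard + (A \ {x, y}).ncard = A.ncard
  ∧ (Aᶜ ∩ {x, y}).ncard + (Aᶜ \ {x, y}).ncard = Aᶜ.ncard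
  ∧ (A ∩ {x, y}).ncard + (Aᶜ ∩ {x, y}).ncard = 2
  ∧ A.ncard + Aᶜ.ncard = Fintype.card V := by
  refine ⟨Set.ncard_inter_add_ncard_diff_eq_ncard A {x, y},
    Set.ncard_inter_add_ncard_diff_eq_ncard Aᶜ {x, y}, ?_, ?_⟩
  · have h := Set.ncard_inter_add_ncard_diff_eq_ncard {x, y} A (Set.toFinite _)
    have e3 : ({x, y} : Set V) ∩ A = A ∩ {x, y} := Set.inter_comm _ _
    have e4 : ({x, y} : Set V) \ A = Aᶜ ∩ {x, y} := by
      ext z; simp [Set.mem_diff, and_comm]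
    rw [e3, e4, Set.ncard_pair hxy] at h
    exact h
  · rw [← Nat.card_eq_fintype_card]
    exact Set.ncard_add_ncard_compl A

lemma pds_of_indep (hconn : G.Connected) (hk1 : 1 ≤ k) (hk2 : k < Fintype.card V - 1)
    (A : Set V) (hind : ∀ x ∈ A, ∀ y ∈ A, ¬G.Adj x y) (hcard : A.ncard = k) :
    IsPDS (betaGraph G k) (betaLM G k ∪ Sum.inr '' A) := by
  set n := Fintype.card V with hn_def
  set m := G.edgeSet.ncard with hm_def
  have hn : k + 2 ≤ n := by omega
  have hm : n - 1 ≤ m := my_card_le_edge G hconn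
  have hℓ : lsize G k + k = m * (n - k - 1) + 1 := by
    have h1 : 0 < n - k - 1 := by omega
    have h2 : m ≤ m * (n - k - 1) := Nat.le_mul_of_pos_right m h1
    rw [lsize, ← hn_def, ← hm_def]; omega
  have hAv : ∃ v, v ∉ A := by
    by_contra h
    push_neg at h
    have : A = Set.univ := Set.eq_univ_of_forall h
    rw [this, Set.ncard_univ, Nat.card_eq_fintype_card] at hcard
    omega
  obtain ⟨v, hv⟩ := hAv
  refine ⟨?_, ?_, ?_⟩
  · rw [Set.ssubset_univ_iff]
    intro h
    have : Sum.inr v ∈ betaLM G k ∪ Sum.inr '' A := h ▸ Set.mem_univ _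
    rcases this with ⟨w, hw⟩ | ⟨w, hw, hw2⟩
    · cases hw
    · exact hv ((Sum.inr_injective hw2) ▸ hw)
  · rw [ncard_SA]; omega
  · rintro ((b | e) | u) hu
    · rw [degIn_Sc_L]; simp
    · rcases e with ⟨s, hs⟩
      induction s using Sym2.ind with
      | _ x y =>
        have hadj : G.Adj x y := (G.mem_edgeSet).mp hs
        have hxy : x ≠ y := hadj.ne
        rw [cond_simp A x y hs]
        obtain ⟨c1, c2, c3, c4⟩ := counts A hxy
        have ht1 : (A ∩ {x, y}).ncard ≤ 1 := by
          by_cases hx : x ∈ A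
          · have hyA : y ∉ A := fun hy => hind x hx y hy hadj
            have hsub : A ∩ {x, y} ⊆ {x} := by
              rintro z ⟨hz, hz2⟩
              rcases hz2 with rfl | rfl
              · rfl
              · exact absurd hz hyA
            calc (A ∩ {x, y}).ncard ≤ ({x} : Set V).ncard :=
                  Set.ncard_le_ncard hsub (Set.toFinite _)
              _ = 1 := Set.ncard_singleton x
          · have hsub : A ∩ {x, y} ⊆ {y} := by
              rintro z ⟨hz, hz2⟩
              rcases hz2 with rfl | rfl
              · exact absurd hz hx
              · rfl
            calc (A ∩ {x, y}).ncard ≤ ({y} : Set V).ncard :=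
                  Set.ncard_le_ncard hsub (Set.toFinite _)
              _ = 1 := Set.ncard_singleton y
        have hAc : Aᶜ.ncard = n - k := by omega
        rw [hcard, hAc]
        exact arith_ok hn hm hℓ
          (show (A ∩ {x, y}).ncard + (A \ {x, y}).ncard = k by omega)
          (show (Aᶜ ∩ {x, y}).ncard + (Aᶜ \ {x, y}).ncard = n - k by omega)
          ht1 c3
    · rw [degIn_Sc_N]; simp

end Main

/-- Theorem 3 of the paper (PDS extension): `L ∪ M` extends to a proper superset
`S ⊊ V'` inducing a PDS of `β(G,k)` iff `G` has an independent set of size at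
least `k`. -/
theorem beta_extension_correct {V : Type*} [Fintype V] (G : SimpleGraph V)
    (hconn : G.Connected) (hstar : ¬ IsStar G)
    (k : ℕ) (hk1 : 1 ≤ k) (hk2 : k < Fintype.card V - 1) :
    (∃ S : Set (BetaVert V G k),
        betaLM G k ⊂ S ∧ S ⊂ Set.univ ∧ IsPDS (betaGraph G k) S)
      ↔ (∃ I : Set V, I.Pairwise (fun a b => ¬ G.Adj a b) ∧ k ≤ I.ncard) := by
  set n := Fintype.card V with hn_def
  set m := G.edgeSet.ncard with hm_def
  have hn : k + 2 ≤ n := by omega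
  have hm : n - 1 ≤ m := my_card_le_edge G hconn
  have hℓ : lsize G k + k = m * (n - k - 1) + 1 := by
    have h1 : 0 < n - k - 1 := by omega
    have h2 : m ≤ m * (n - k - 1) := Nat.le_mul_of_pos_right m h1
    rw [lsize, ← hn_def, ← hm_def]; omega
  constructor
  · rintro ⟨S, hLM, hSU, hPDS⟩
    set A := Sum.inr ⁻¹' S with hA_def
    have hS : S = betaLM G k ∪ Sum.inr '' A := by
      ext x
      constructor
      · intro hx
        cases x with
        | inl y => exact Or.inl ⟨y, rfl⟩
        | inr v => exact Or.inr ⟨v, hx, rfl⟩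
      · rintro (⟨y, rfl⟩ | ⟨v, hv, rfl⟩)
        · exact hLM.1 ⟨y, rfl⟩
        · exact hv
    have hAnu : ∃ v, v ∉ A := by
      obtain ⟨x, -, hxS⟩ := Set.exists_of_ssubset hSU
      cases x with
      | inl y => exact absurd (hLM.1 ⟨y, rfl⟩) hxS
      | inr v => exact ⟨v, hxS⟩
    have hAlt : A.ncard < n := by
      obtain ⟨v, hv⟩ := hAnu
      have h1 := Set.ncard_add_ncard_compl A
      rw [Nat.card_eq_fintype_card] at h1
      have h2 : 0 < Aᶜ.ncard := (Set.ncard_pos (Set.toFinite _)).mpr ⟨v, hv⟩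
      omega
    have hApos : A.Nonempty := by
      obtain ⟨x, hxS, hxn⟩ := Set.exists_of_ssubset hLM
      cases x with
      | inl y => exact absurd ⟨y, rfl⟩ hxn
      | inr v => exact ⟨v, hxS⟩
    rw [hS] at hPDS
    obtain ⟨-, -, hcond⟩ := hPDS
    have hind : ∀ x ∈ A, ∀ y ∈ A, ¬ G.Adj x y := by
      intro x hx y hy hadj
      have hs : s(x, y) ∈ G.edgeSet := (G.mem_edgeSet).mpr hadj
      have hmem : Sum.inl (Sum.inr (⟨s(x, y), hs⟩ : ↥G.edgeSet)) ∈
          betaLM G k ∪ Sum.inr '' A := Or.inl ⟨Sum.inr ⟨s(x, y), hs⟩, rfl⟩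
      have hc := (cond_simp A x y hs).mp (hcond _ hmem)
      obtain ⟨c1, c2, c3, c4⟩ := counts A hadj.ne
      have hsub : ({x, y} : Set V) ⊆ A := by
        intro z hz
        simp only [Set.mem_insert_iff, Set.mem_singleton_iff] at hz
        rcases hz with rfl | rfl
        exacts [hx, hy]
      have ht2 : (A ∩ {x, y}).ncard = 2 := by
        rw [Set.inter_eq_right.mpr hsub, Set.ncard_pair hadj.ne]
      have hAc : Aᶜ.ncard = n - A.ncard := by omega
      rw [hAc] at hc
      exact arith_t2 hn hm hℓ
        (show 2 + (A \ {x, y}).ncard = A.ncard by omega)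
        (show 0 + (Aᶜ \ {x, y}).ncard = n - A.ncard by omega) hAlt hc
    refine ⟨A, fun x hx y hy _ => hind x hx y hy, ?_⟩
    obtain ⟨x0, hx0⟩ := hApos
    obtain ⟨v0, hv0⟩ := hAnu
    obtain ⟨p⟩ := hconn.preconnected x0 v0
    obtain ⟨d, -, hd1, hd2⟩ := p.exists_boundary_dart A hx0 hv0
    have hadj : G.Adj d.toProd.1 d.toProd.2 := d.adj
    have hs : s(d.toProd.1, d.toProd.2) ∈ G.edgeSet := (G.mem_edgeSet).mpr hadj
    have hmem : Sum.inl (Sum.inr (⟨s(d.toProd.1, d.toProd.2), hs⟩ : ↥G.edgeSet)) ∈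
        betaLM G k ∪ Sum.inr '' A := Or.inl ⟨Sum.inr ⟨s(d.toProd.1, d.toProd.2), hs⟩, rfl⟩
    have hc := (cond_simp A _ _ hs).mp (hcond _ hmem)
    obtain ⟨c1, c2, c3, c4⟩ := counts A hadj.ne
    have ht1 : (A ∩ {d.toProd.1, d.toProd.2}).ncard = 1 := by
      have heq : A ∩ {d.toProd.1, d.toProd.2} = {d.toProd.1} := by
        ext z
        constructor
        · rintro ⟨hz, hz2⟩
          simp only [Set.mem_insert_iff, Set.mem_singleton_iff] at hz2
          rcases hz2 with rfl | rfl
          · rfl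
          · exact absurd hz hd2
        · rintro rfl
          exact ⟨hd1, Or.inl rfl⟩
      rw [heq, Set.ncard_singleton]
    have hAc : Aᶜ.ncard = n - A.ncard := by omega
    rw [hAc] at hc
    exact arith_t1 hn hm hℓ
      (show 1 + (A \ {d.toProd.1, d.toProd.2}).ncard = A.ncard by omega)
      (show 1 + (Aᶜ \ {d.toProd.1, d.toProd.2}).ncard = n - A.ncard by omega) hAlt hc
  · rintro ⟨I, hI, hIk⟩
    obtain ⟨A, hAI, hAk⟩ := Set.exists_subset_card_eq hIk
    have hind : ∀ x ∈ A, ∀ y ∈ A, ¬ G.Adj x y := by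
      intro x hx y hy hadj
      exact hI (hAI hx) (hAI hy) hadj.ne hadj
    have hpds := pds_of_indep hconn hk1 hk2 A hind hAk
    refine ⟨betaLM G k ∪ Sum.inr '' A, ⟨Set.subset_union_left, ?_⟩, hpds.1, hpds⟩
    intro hsub
    obtain ⟨v, hv⟩ : A.Nonempty := Set.nonempty_of_ncard_ne_zero (by omega)
    obtain ⟨y, hy⟩ := hsub (Or.inr ⟨v, hv, rfl⟩)
    cases hy
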